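/- Let G be a finite simple graph, let l ≥ 1, and let B be a set of cycles of G each of weight exactly l. Then there exists a minimum cycle basis of G containing B if and only if for every nonempty subset D ⊆ B, the sum ⊕_{c ∈ D} c does not lie in the linear span (over ℤ/2ℤ) of the set of cycles of G of weight at most l − 1. -/

import Mathlib

open scoped symmDiff


namespace MCBI

variable {V : Type*} [Fintype V] [DecidableEq V]

/-- A *cycle* of a simple graph `G`: a set of edges of `G` such that every vertex of `G`
is incident to an even number of them. -/
def IsCycle (G : SimpleGraph V) (c : Finset (Sym2 V)) : Prop :=
  (↑c : Set (Sym2 V)) ⊆ G.edgeSet ∧ ∀ v : V, Even (c.filter (fun e => v ∈ e)).card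

/-- The `⊕`-sum (GF(2)-sum, i.e. iterated symmetric difference) of a finite set of cycles:
an edge lies in the sum iff it lies in an odd number of the cycles. -/
def cycleSum (D : Finset (Finset (Sym2 V))) : Finset (Sym2 V) :=
  Finset.univ.filter fun e => Odd (D.filter (fun c => e ∈ c)).card

/-- Linear independence over `ℤ/2ℤ`: no nonempty subset sums to the empty cycle. -/
def LinIndep (B : Finset (Finset (Sym2 V))) : Prop :=
  ∀ D ⊆ B, D.Nonempty → cycleSum D ≠ ∅

/-- `B` spans every cycle of `G`. -/
def SpansCycles (G : SimpleGraph V) (B : Finset (Finset (Sym2 V))) : Prop :=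
  ∀ c : Finset (Sym2 V), IsCycle G c → ∃ D ⊆ B, cycleSum D = c

/-- A *cycle basis* of `G`: a linearly independent set of cycles spanning every cycle of `G`. -/
def IsCycleBasis (G : SimpleGraph V) (B : Finset (Finset (Sym2 V))) : Prop :=
  (∀ c ∈ B, IsCycle G c) ∧ LinIndep B ∧ SpansCycles G B

/-- `λ_B(c, d) = 1`: the cycle `c` belongs to a subset of `B` summing to `d`
(the unique such subset when `B` is a basis). -/
def lambdaEq1 (B : Finset (Finset (Sym2 V))) (c d : Finset (Sym2 V)) : Prop :=
  ∃ D ⊆ B, cycleSum D = d ∧ c ∈ D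

/-- Total weight of a set of cycles: the sum of the numbers of edges of its cycles. -/
def weight (B : Finset (Finset (Sym2 V))) : ℕ := ∑ c ∈ B, c.card

/-- A *minimum cycle basis*: a cycle basis of minimum total weight. -/
def IsMCB (G : SimpleGraph V) (B : Finset (Finset (Sym2 V))) : Prop :=
  IsCycleBasis G B ∧
    ∀ B' : Finset (Finset (Sym2 V)), IsCycleBasis G B' → weight B ≤ weight B'

/-- Membership in the `ℤ/2ℤ`-linear span of a set `S` of cycles. -/
def InSpan (S : Set (Finset (Sym2 V))) (c : Finset (Sym2 V)) : Prop :=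
  ∃ D : Finset (Finset (Sym2 V)), (↑D : Set (Finset (Sym2 V))) ⊆ S ∧ cycleSum D = c

/-- The vertices incident to the edges of a cycle. -/
def cycVerts (c : Finset (Sym2 V)) : Finset V :=
  Finset.univ.filter fun v => ∃ e ∈ c, v ∈ e

/-- A finite set of edges forms a connected subgraph: the graph consisting of these edges
together with their endpoints is connected. -/
def EdgesConnected (E : Finset (Sym2 V)) : Prop :=
  ((SimpleGraph.fromEdgeSet (↑E : Set (Sym2 V))).induce {v : V | ∃ e ∈ E, v ∈ e}).Connected

/-- An *elementary cycle*: a nonempty cycle whose edges form a connected subgraph in which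
every incident vertex has degree exactly `2`. -/
def IsElementaryCycle (G : SimpleGraph V) (c : Finset (Sym2 V)) : Prop :=
  IsCycle G c ∧ c.Nonempty ∧
    (∀ v : V, (∃ e ∈ c, v ∈ e) → (c.filter (fun e => v ∈ e)).card = 2) ∧
    EdgesConnected c

/-- The family of independent sets of the matroid `𝓜(G)`: the sets of cycles contained
in some minimum cycle basis of `G`. -/
def matroidIndep (G : SimpleGraph V) : Set (Finset (Finset (Sym2 V))) :=
  {D | ∃ B, IsMCB G B ∧ D ⊆ B}

/-- A set `B` of cycles of the intersection graph `G` is *feasible* for the instance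
`G₁, …, G_k` if for every `i` there is a minimum cycle basis of `Gᵢ` containing `B`. -/
def Feasible {k : ℕ} (Gs : Fin k → SimpleGraph V) (G : SimpleGraph V)
    (B : Finset (Finset (Sym2 V))) : Prop :=
  (∀ c ∈ B, IsCycle G c) ∧ ∀ i : Fin k, ∃ Bi, IsMCB (Gs i) Bi ∧ B ⊆ Bi


set_option linter.unusedSectionVars false

lemma mem_cycleSum {D : Finset (Finset (Sym2 V))} {e : Sym2 V} :
    e ∈ cycleSum D ↔ Odd (D.filter (fun c => e ∈ c)).card := by
  simp [cycleSum]

lemma cycleSum_empty : cycleSum (∅ : Finset (Finset (Sym2 V))) = ∅ := by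
  simp [cycleSum]

lemma cycleSum_singleton (c : Finset (Sym2 V)) : cycleSum {c} = c := by
  ext e
  rw [mem_cycleSum, Finset.filter_singleton]
  split <;> simp_all

lemma card_symmDiff_aux {α : Type*} [DecidableEq α] (A B : Finset α) :
    (A ∆ B).card + 2 * (A ∩ B).card = A.card + B.card := by
  have h1 : (A ∆ B) ∪ (A ∩ B) = A ∪ B := by
    ext x; simp [Finset.mem_symmDiff]; tauto
  have h2 : Disjoint (A ∆ B) (A ∩ B) := by
    rw [Finset.disjoint_left]
    intro x hx hx2
    simp [Finset.mem_symmDiff] at hx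
    simp at hx2
    tauto
  have h3 := Finset.card_union_of_disjoint h2
  have h4 := Finset.card_union_add_card_inter A B
  rw [h1] at h3
  omega

lemma cycleSum_symmDiff (D₁ D₂ : Finset (Finset (Sym2 V))) :
    cycleSum (D₁ ∆ D₂) = cycleSum D₁ ∆ cycleSum D₂ := by
  ext e
  rw [Finset.mem_symmDiff]
  simp only [mem_cycleSum]
  have hf : (D₁ ∆ D₂).filter (fun c => e ∈ c)
      = (D₁.filter (fun c => e ∈ c)) ∆ (D₂.filter (fun c => e ∈ c)) := by
    ext c; simp [Finset.mem_symmDiff]; tauto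
  rw [hf]
  have h := card_symmDiff_aux (D₁.filter (fun c => e ∈ c)) (D₂.filter (fun c => e ∈ c))
  rw [Nat.odd_iff, Nat.odd_iff, Nat.odd_iff]
  omega

lemma cycleSum_insert {c : Finset (Sym2 V)} {D : Finset (Finset (Sym2 V))} (h : c ∉ D) :
    cycleSum (insert c D) = c ∆ cycleSum D := by
  have : insert c D = {c} ∆ D := by
    ext x; simp [Finset.mem_symmDiff]; constructor
    · rintro (rfl | hx)
      · exact Or.inl ⟨rfl, h⟩
      · right; exact ⟨hx, fun h' => h (h' ▸ hx)⟩
    · tauto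
  rw [this, cycleSum_symmDiff, cycleSum_singleton]

lemma symmDiff_eq_empty {A B : Finset (Sym2 V)} (h : A ∆ B = ∅) : A = B := by
  rwa [← Finset.bot_eq_empty, symmDiff_eq_bot] at h

lemma rep_unique {B D₁ D₂ : Finset (Finset (Sym2 V))} (h : LinIndep B)
    (h1 : D₁ ⊆ B) (h2 : D₂ ⊆ B) (he : cycleSum D₁ = cycleSum D₂) : D₁ = D₂ := by
  have hsub : D₁ ∆ D₂ ⊆ B := by
    intro x hx; rw [Finset.mem_symmDiff] at hx
    rcases hx with ⟨hx, _⟩ | ⟨hx, _⟩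
    exacts [h1 hx, h2 hx]
  have hz : cycleSum (D₁ ∆ D₂) = ∅ := by
    rw [cycleSum_symmDiff, he]; simp
  by_contra hne
  have hne' : D₁ ∆ D₂ ≠ ∅ := fun h0 =>
    hne (by rwa [← Finset.bot_eq_empty, symmDiff_eq_bot] at h0)
  exact h _ hsub (Finset.nonempty_iff_ne_empty.2 hne') hz

/-- Exchange lemma. -/
lemma exchange {G : SimpleGraph V} {B : Finset (Finset (Sym2 V))}
    (hB : IsCycleBasis G B) {c d : Finset (Sym2 V)} (hc : IsCycle G c)
    (hcB : c ∉ B) {D : Finset (Finset (Sym2 V))} (hD : D ⊆ B)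
    (hsum : cycleSum D = c) (hd : d ∈ D) :
    IsCycleBasis G (insert c (B.erase d)) := by
  obtain ⟨hcyc, hind, hspan⟩ := hB
  refine ⟨?_, ?_, ?_⟩
  · intro x hx
    rcases Finset.mem_insert.1 hx with rfl | hx
    · exact hc
    · exact hcyc x (Finset.mem_of_mem_erase hx)
  · intro E hE hEne hEz
    by_cases hcE : c ∈ E
    · have hE₀B : E.erase c ⊆ B.erase d := by
        intro x hx
        have hx2 := hE (Finset.mem_of_mem_erase hx)
        rcases Finset.mem_insert.1 hx2 with rfl | h
        · exact absurd rfl (Finset.ne_of_mem_erase hx)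
        · exact h
      have hE₀B' : E.erase c ⊆ B := hE₀B.trans (Finset.erase_subset _ _)
      have hEeq : E = insert c (E.erase c) := (Finset.insert_erase hcE).symm
      rw [hEeq, cycleSum_insert (Finset.notMem_erase _ _)] at hEz
      have hcrep : cycleSum (E.erase c) = c :=
        (symmDiff_eq_empty hEz).symm
      have : E.erase c = D := rep_unique hind hE₀B' hD (by rw [hcrep, hsum])
      have hdmem : d ∈ E.erase c := this ▸ hd
      exact (Finset.mem_erase.1 (hE₀B hdmem)).1 rfl
    · have hEB : E ⊆ B := by
        intro x hx
        rcases Finset.mem_insert.1 (hE hx) with rfl | h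
        · exact absurd hx hcE
        · exact Finset.mem_of_mem_erase h
      exact hind E hEB hEne hEz
  · intro x hx
    obtain ⟨Dx, hDx, hDxs⟩ := hspan x hx
    by_cases hdDx : d ∈ Dx
    · refine ⟨insert c (Dx ∆ D), ?_, ?_⟩
      · intro y hy
        rcases Finset.mem_insert.1 hy with rfl | hy
        · exact Finset.mem_insert_self _ _
        · apply Finset.mem_insert_of_mem
          rw [Finset.mem_symmDiff] at hy
          rw [Finset.mem_erase]
          rcases hy with ⟨h1, h2⟩ | ⟨h1, h2⟩
          · exact ⟨fun h => h2 (h ▸ hd), hDx h1⟩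
          · exact ⟨fun h => h2 (h ▸ hdDx), hD h1⟩
      · have hcnot : c ∉ Dx ∆ D := by
          rw [Finset.mem_symmDiff]
          rintro (⟨h1, _⟩ | ⟨h1, _⟩)
          · exact hcB (hDx h1)
          · exact hcB (hD h1)
        rw [cycleSum_insert hcnot, cycleSum_symmDiff, hDxs, hsum]
        rw [symmDiff_comm x c, ← symmDiff_assoc, symmDiff_self]
        simp
    · refine ⟨Dx, ?_, hDxs⟩
      intro y hy
      exact Finset.mem_insert_of_mem
        (Finset.mem_erase.2 ⟨fun h => hdDx (h ▸ hy), hDx hy⟩)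

lemma weight_exchange {B : Finset (Finset (Sym2 V))} {c d : Finset (Sym2 V)}
    (hcB : c ∉ B) (hdB : d ∈ B) :
    weight (insert c (B.erase d)) + d.card = weight B + c.card := by
  have h1 : weight (insert c (B.erase d)) = c.card + weight (B.erase d) :=
    Finset.sum_insert (fun h => hcB (Finset.mem_of_mem_erase h))
  have h2 : weight (B.erase d) + d.card = weight B :=
    Finset.sum_erase_add B (fun x => x.card) hdB
  omega

lemma exists_cycleBasis (G : SimpleGraph V) : ∃ B, IsCycleBasis G B := by
  classical
  obtain ⟨B, hBmem, hBmax⟩ := Finset.exists_max_image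
    (Finset.univ.filter fun B : Finset (Finset (Sym2 V)) =>
      (∀ c ∈ B, IsCycle G c) ∧ LinIndep B)
    Finset.card
    ⟨∅, by
      simp only [Finset.mem_filter, Finset.mem_univ, true_and]
      refine ⟨fun c hc => absurd hc (Finset.notMem_empty c), ?_⟩
      intro D hD hDne _
      rw [Finset.subset_empty] at hD
      exact absurd hD (Finset.nonempty_iff_ne_empty.1 hDne)⟩
  rw [Finset.mem_filter] at hBmem
  obtain ⟨-, hBcyc, hBind⟩ := hBmem
  refine ⟨B, hBcyc, hBind, ?_⟩
  intro x hx
  by_cases hxB : x ∈ B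
  · exact ⟨{x}, Finset.singleton_subset_iff.2 hxB, cycleSum_singleton x⟩
  · have hni : ¬ LinIndep (insert x B) := by
      intro hli
      have hmem : insert x B ∈ Finset.univ.filter fun B : Finset (Finset (Sym2 V)) =>
          (∀ c ∈ B, IsCycle G c) ∧ LinIndep B := by
        rw [Finset.mem_filter]
        refine ⟨Finset.mem_univ _, ?_, hli⟩
        intro c hc
        rcases Finset.mem_insert.1 hc with rfl | hc
        · exact hx
        · exact hBcyc c hc
      have := hBmax _ hmem
      rw [Finset.card_insert_of_notMem hxB] at this
      omega
    unfold LinIndep at hni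
    push_neg at hni
    obtain ⟨E, hE, hEne, hEz⟩ := hni
    by_cases hxE : x ∈ E
    · have hE₀B : E.erase x ⊆ B := by
        intro y hy
        rcases Finset.mem_insert.1 (hE (Finset.mem_of_mem_erase hy)) with rfl | h
        · exact absurd rfl (Finset.ne_of_mem_erase hy)
        · exact h
      have hEeq : E = insert x (E.erase x) := (Finset.insert_erase hxE).symm
      rw [hEeq, cycleSum_insert (Finset.notMem_erase _ _)] at hEz
      exact ⟨E.erase x, hE₀B, (symmDiff_eq_empty hEz).symm⟩
    · have hEB : E ⊆ B := by
        intro y hy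
        rcases Finset.mem_insert.1 (hE hy) with rfl | h
        · exact absurd hy hxE
        · exact h
      exact absurd hEz (hBind E hEB hEne)

lemma exists_mcb (G : SimpleGraph V) : ∃ B, IsMCB G B := by
  classical
  obtain ⟨B₀, hB₀⟩ := exists_cycleBasis G
  obtain ⟨B, hBmem, hBmin⟩ := Finset.exists_min_image
    (Finset.univ.filter fun B : Finset (Finset (Sym2 V)) => IsCycleBasis G B)
    weight ⟨B₀, by simp [hB₀]⟩
  rw [Finset.mem_filter] at hBmem
  refine ⟨B, hBmem.2, ?_⟩
  intro B' hB'
  exact hBmin B' (by simp [hB'])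

lemma rep_of_sum {G : SimpleGraph V} {B' : Finset (Finset (Sym2 V))}
    (hspan : SpansCycles G B') :
    ∀ S : Finset (Finset (Sym2 V)), (∀ s ∈ S, IsCycle G s) →
    ∃ E ⊆ B', cycleSum E = cycleSum S ∧
      ∀ c ∈ E, ∃ s ∈ S, ∃ Ds ⊆ B', cycleSum Ds = s ∧ c ∈ Ds := by
  classical
  intro S
  induction S using Finset.induction_on with
  | empty =>
    intro _
    exact ⟨∅, Finset.empty_subset _, rfl, fun c hc => absurd hc (Finset.notMem_empty c)⟩
  | insert _ _ ha ih =>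
    rename_i a S
    intro hS
    obtain ⟨E, hE, hEsum, htr⟩ := ih (fun s hs => hS s (Finset.mem_insert_of_mem hs))
    obtain ⟨Da, hDa, hDas⟩ := hspan a (hS a (Finset.mem_insert_self _ _))
    refine ⟨Da ∆ E, ?_, ?_, ?_⟩
    · intro y hy
      rw [Finset.mem_symmDiff] at hy
      rcases hy with ⟨h1, _⟩ | ⟨h1, _⟩
      exacts [hDa h1, hE h1]
    · rw [cycleSum_symmDiff, hDas, hEsum, cycleSum_insert ha]
    · intro c hc
      rw [Finset.mem_symmDiff] at hc
      rcases hc with ⟨h1, _⟩ | ⟨h1, _⟩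
      · exact ⟨a, Finset.mem_insert_self _ _, Da, hDa, hDas, h1⟩
      · obtain ⟨s, hs, Ds, hDs, h⟩ := htr c h1
        exact ⟨s, Finset.mem_insert_of_mem hs, Ds, hDs, h⟩

/-- Let `l ≥ 1` and let `B` be a set of cycles of `G`, each of weight
exactly `l`. Then `B` extends to a minimum cycle basis of `G` iff no nonempty subset of `B`
has its `⊕`-sum in the `ℤ/2ℤ`-span of the cycles of `G` of weight at most `l - 1`. -/
theorem extends_to_mcb_iff_no_small_span (G : SimpleGraph V) (l : ℕ) (hl : 1 ≤ l)
    (B : Finset (Finset (Sym2 V))) (hB : ∀ c ∈ B, IsCycle G c ∧ c.card = l) :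
    (∃ B' : Finset (Finset (Sym2 V)), IsMCB G B' ∧ B ⊆ B') ↔
      ∀ D ⊆ B, D.Nonempty →
        ¬ InSpan {c : Finset (Sym2 V) | IsCycle G c ∧ c.card ≤ l - 1} (cycleSum D) := by
  classical
  constructor
  · rintro ⟨B', hMCB, hBB'⟩ D hD hDne ⟨S, hSsub, hSsum⟩
    obtain ⟨hbasis, hmin⟩ := hMCB
    obtain ⟨hcyc', hind', hspan'⟩ := hbasis
    obtain ⟨E, hE, hEsum, htr⟩ := rep_of_sum hspan' S (fun s hs => (hSsub hs).1)
    have hED : E = D := rep_unique hind' hE (hD.trans hBB') (by rw [hEsum, hSsum])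
    obtain ⟨c₀, hc₀⟩ := hDne
    have hc₀E : c₀ ∈ E := hED ▸ hc₀
    obtain ⟨s, hsS, Ds, hDs, hDssum, hc₀Ds⟩ := htr c₀ hc₀E
    have hssmall : IsCycle G s ∧ s.card ≤ l - 1 := hSsub hsS
    have hc₀card : c₀.card = l := (hB c₀ (hD hc₀)).2
    have hsB' : s ∉ B' := by
      intro hs
      have : Ds = {s} := rep_unique hind' hDs
        (Finset.singleton_subset_iff.2 hs) (by rw [hDssum, cycleSum_singleton])
      rw [this, Finset.mem_singleton] at hc₀Ds
      rw [hc₀Ds] at hc₀card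
      have := hssmall.2
      omega
    have hbasis'' := exchange ⟨hcyc', hind', hspan'⟩ hssmall.1 hsB' hDs hDssum hc₀Ds
    have hw := weight_exchange hsB' (hDs hc₀Ds)
    have hle := hmin _ hbasis''
    have := hssmall.2
    omega
  · intro hcond
    obtain ⟨B₀, hB₀⟩ := exists_mcb G
    suffices h : ∀ n (B' : Finset (Finset (Sym2 V))), IsMCB G B' → (B \ B').card = n →
        ∃ B'', IsMCB G B'' ∧ B ⊆ B'' by
      exact h _ B₀ hB₀ rfl
    intro n
    induction n using Nat.strong_induction_on with
    | _ n ih =>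
    intro B' hB' hcard
    by_cases hsub : B ⊆ B'
    · exact ⟨B', hB', hsub⟩
    · obtain ⟨c, hcB, hcB'⟩ := Finset.not_subset.1 hsub
      have hccyc : IsCycle G c := (hB c hcB).1
      obtain ⟨D', hD', hD's⟩ := hB'.1.2.2 c hccyc
      have hc2 : c ∉ D' := fun h => hcB' (hD' h)
      have hex : ∃ d ∈ D', d ∉ B ∧ l ≤ d.card := by
        by_contra hno
        push_neg at hno
        have hcin : c ∉ D' ∩ B := fun h => hc2 (Finset.mem_of_mem_inter_left h)
        have hD₀B : insert c (D' ∩ B) ⊆ B := by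
          intro x hx
          rcases Finset.mem_insert.1 hx with rfl | hx
          · exact hcB
          · exact Finset.mem_of_mem_inter_right hx
        have hsplit : D' = (D' ∩ B) ∆ (D' \ B) := by
          ext x; simp [Finset.mem_symmDiff]; tauto
        have key : cycleSum D' = cycleSum (D' ∩ B) ∆ cycleSum (D' \ B) := by
          conv_lhs => rw [hsplit]
          rw [cycleSum_symmDiff]
        have hsum : cycleSum (insert c (D' ∩ B)) = cycleSum (D' \ B) := by
          rw [cycleSum_insert hcin, ← hD's, key,
            symmDiff_comm (cycleSum (D' ∩ B)) (cycleSum (D' \ B)),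
            symmDiff_symmDiff_cancel_right]
        refine hcond _ hD₀B ⟨c, Finset.mem_insert_self _ _⟩ ⟨D' \ B, ?_, hsum.symm⟩
        intro x hx
        rw [Finset.coe_sdiff] at hx
        obtain ⟨hx1, hx2⟩ := hx
        have hxc : IsCycle G x := hB'.1.1 x (hD' hx1)
        have := hno x hx1
        rcases Decidable.em (x ∈ B) with h | h
        · exact absurd h hx2
        · have := this h
          exact ⟨hxc, by omega⟩
      obtain ⟨d, hdD', hdB, hdcard⟩ := hex
      have hbasis'' := exchange hB'.1 hccyc hcB' hD' hD's hdD'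
      have hw := weight_exchange hcB' (hD' hdD')
      have hccard : c.card = l := (hB c hcB).2
      have hB''mcb : IsMCB G (insert c (B'.erase d)) := by
        refine ⟨hbasis'', ?_⟩
        intro Bx hBx
        have h1 := hB'.2 Bx hBx
        omega
      have hsub2 : B \ insert c (B'.erase d) ⊆ (B \ B').erase c := by
        intro x hx
        rw [Finset.mem_sdiff] at hx
        obtain ⟨hx1, hx2⟩ := hx
        rw [Finset.mem_insert] at hx2
        push_neg at hx2
        obtain ⟨hxc, hxe⟩ := hx2
        rw [Finset.mem_erase] at hxe
        push_neg at hxe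
        refine Finset.mem_erase.2 ⟨hxc, Finset.mem_sdiff.2 ⟨hx1, ?_⟩⟩
        intro hxB'
        rcases eq_or_ne x d with rfl | hne
        · exact hdB hx1
        · exact hxe hne hxB'
      have hlt : (B \ insert c (B'.erase d)).card < n := by
        have h1 : ((B \ B').erase c).card < (B \ B').card :=
          Finset.card_erase_lt_of_mem (Finset.mem_sdiff.2 ⟨hcB, hcB'⟩)
        have h2 := Finset.card_le_card hsub2
        omega
      exact ih _ hlt _ hB''mcb rfl

end MCBI
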